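/- Let A be a bounded linear operator on a complex Hilbert space H and x, y ∈ H. Then |⟨Ax, y⟩| ≤ √(⟨|A|x, x⟩ · ⟨|A*|y, y⟩), where |A| = (A*A)^{1/2} and |A*| = (AA*)^{1/2}. -/

import Mathlib

open ContinuousLinearMap MeasureTheory

variable {H : Type*} [NormedAddCommGroup H] [InnerProductSpace ℂ H] [CompleteSpace H]

/-- The numerical radius of a bounded operator. -/
noncomputable def numRadius (A : H →L[ℂ] H) : ℝ :=
  sSup {r : ℝ | ∃ x : H, ‖x‖ = 1 ∧ r = ‖(inner ℂ (A x) x : ℂ)‖}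

/-- The absolute value `|A| = (A*A)^(1/2)` of a bounded operator. -/
noncomputable def opAbs (A : H →L[ℂ] H) : H →L[ℂ] H := CFC.sqrt (adjoint A * A)

open Polynomial Filter

set_option synthInstance.maxHeartbeats 1000000
set_option maxHeartbeats 1000000

local notation "⟪" x ", " y "⟫" => @inner ℂ _ _ x y

lemma swap_mul (A : H →L[ℂ] H) : A * (adjoint A * A) = (A * adjoint A) * A :=
  (mul_assoc _ _ _).symm

lemma pow_intertwine (A : H →L[ℂ] H) (n : ℕ) :
    A * (adjoint A * A) ^ n = (A * adjoint A) ^ n * A := by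
  induction n with
  | zero => simp
  | succ n ih =>
    calc A * (adjoint A * A) ^ (n + 1)
        = (A * (adjoint A * A) ^ n) * (adjoint A * A) := by rw [pow_succ, mul_assoc]
      _ = ((A * adjoint A) ^ n * A) * (adjoint A * A) := by rw [ih]
      _ = (A * adjoint A) ^ n * (A * (adjoint A * A)) := by rw [mul_assoc]
      _ = (A * adjoint A) ^ n * ((A * adjoint A) * A) := by rw [swap_mul]
      _ = (A * adjoint A) ^ (n + 1) * A := by rw [← mul_assoc, ← pow_succ]

lemma aeval_intertwine (A : H →L[ℂ] H) (q : ℝ[X]) :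
    A * aeval (adjoint A * A) q = aeval (A * adjoint A) q * A := by
  induction q using Polynomial.induction_on with
  | C c =>
    simp [Algebra.algebraMap_eq_smul_one, smul_mul_assoc, mul_smul_comm]
  | add p q hp hq => simp [mul_add, add_mul, hp, hq]
  | monomial n c ih =>
    simp only [map_mul, aeval_C, aeval_X_pow, Algebra.algebraMap_eq_smul_one,
      smul_mul_assoc, one_mul, mul_smul_comm]
    rw [pow_intertwine]

lemma cfc_intertwine (A : H →L[ℂ] H) (f : ℝ → ℝ) (hf : Continuous f) :
    A * cfc f (adjoint A * A) = cfc f (A * adjoint A) * A := by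
  set a := adjoint A * A with ha
  set b := A * adjoint A with hb
  have hsa : IsSelfAdjoint a := by
    rw [ha, ← star_eq_adjoint]; exact IsSelfAdjoint.star_mul_self A
  have hsb : IsSelfAdjoint b := by
    rw [hb, ← star_eq_adjoint]; exact IsSelfAdjoint.mul_star_self A
  set M : ℝ := (‖a‖ + ‖b‖) * ‖(1 : H →L[ℂ] H)‖ with hM
  have hbound : ∀ c : H →L[ℂ] H, ‖c‖ ≤ ‖a‖ + ‖b‖ → spectrum ℝ c ⊆ Set.Icc (-M) M := by
    intro c hc t ht
    have h1 := spectrum.norm_le_norm_mul_of_mem ht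
    have h2 : ‖t‖ ≤ M := h1.trans <| by
      apply mul_le_mul_of_nonneg_right hc (norm_nonneg _)
    rw [Real.norm_eq_abs, abs_le] at h2
    exact ⟨h2.1, h2.2⟩
  have hspa := hbound a (le_add_of_nonneg_right (norm_nonneg _))
  have hspb := hbound b (le_add_of_nonneg_left (norm_nonneg _))
  have key : ∀ ε > (0:ℝ), ‖A * cfc f a - cfc f b * A‖ ≤ 2 * ‖A‖ * ε := by
    intro ε hε
    obtain ⟨p, hp⟩ := exists_polynomial_near_of_continuousOn (-M) M f hf.continuousOn ε hε
    have hpa : ‖cfc f a - cfc (fun t => p.eval t) a‖ ≤ ε := by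
      rw [← cfc_sub f (fun t => p.eval t) a hf.continuousOn (Polynomial.continuous p).continuousOn]
      refine norm_cfc_le hε.le fun t ht => ?_
      rw [Real.norm_eq_abs, abs_sub_comm]
      exact (hp t (hspa ht)).le
    have hpb : ‖cfc (fun t => p.eval t) b - cfc f b‖ ≤ ε := by
      rw [← cfc_sub (fun t => p.eval t) f b (Polynomial.continuous p).continuousOn hf.continuousOn]
      refine norm_cfc_le hε.le fun t ht => ?_
      rw [Real.norm_eq_abs]
      exact (hp t (hspb ht)).le
    have hpoly : A * cfc (fun t => p.eval t) a = cfc (fun t => p.eval t) b * A := by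
      rw [cfc_polynomial p a hsa, cfc_polynomial p b hsb]
      exact aeval_intertwine A p
    have hdecomp : A * cfc f a - cfc f b * A
        = A * (cfc f a - cfc (fun t => p.eval t) a)
          + (cfc (fun t => p.eval t) b - cfc f b) * A := by
      rw [mul_sub, sub_mul, hpoly]; abel
    rw [hdecomp]
    calc ‖_ + _‖ ≤ ‖A * (cfc f a - cfc (fun t => p.eval t) a)‖
          + ‖(cfc (fun t => p.eval t) b - cfc f b) * A‖ := norm_add_le _ _
      _ ≤ ‖A‖ * ε + ε * ‖A‖ := by
          refine add_le_add ?_ ?_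
          · exact (norm_mul_le _ _).trans (mul_le_mul_of_nonneg_left hpa (norm_nonneg _))
          · exact (norm_mul_le _ _).trans (mul_le_mul_of_nonneg_right hpb (norm_nonneg _))
      _ = 2 * ‖A‖ * ε := by ring
  have h0 : A * cfc f a - cfc f b * A = 0 := by
    rw [← norm_le_zero_iff]
    refine le_of_forall_pos_le_add fun ε hε => ?_
    have := key (ε / (2 * ‖A‖ + 1)) (by positivity)
    have h2 : 2 * ‖A‖ * (ε / (2 * ‖A‖ + 1)) ≤ ε := by
      rw [mul_div_assoc']
      rw [div_le_iff₀ (by positivity)]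
      nlinarith [norm_nonneg A]
    linarith
  exact sub_eq_zero.mp h0


lemma sqrt_eq_cfc_real (a : H →L[ℂ] H) (ha : 0 ≤ a) (hsa : IsSelfAdjoint a) :
    CFC.sqrt a = cfc Real.sqrt a := by
  refine CFC.sqrt_unique ?_ (cfc_nonneg fun t _ => Real.sqrt_nonneg t)
  rw [← cfc_mul _ _ a Real.continuous_sqrt.continuousOn Real.continuous_sqrt.continuousOn]
  exact (cfc_congr fun t ht =>
    Real.mul_self_sqrt (spectrum_nonneg_of_nonneg ha ht)).trans (cfc_id' ℝ a hsa)

lemma inner_mono {P Q : H →L[ℂ] H} (h : P ≤ Q) (y : H) :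
    (⟪P y, y⟫).re ≤ (⟪Q y, y⟫).re := by
  rw [ContinuousLinearMap.le_def] at h
  have h2 := h.inner_nonneg_left y
  simp only [sub_apply, inner_sub_left] at h2
  have h3 : 0 ≤ (⟪Q y, y⟫ - ⟪P y, y⟫).re := by simpa using (Complex.le_def.mp h2).1
  rw [Complex.sub_re] at h3
  linarith

lemma re_inner_symm' (u v : H) : (⟪u, v⟫).re = (⟪v, u⟫).re := by
  rw [← inner_conj_symm, Complex.conj_re]

/-- Mixed Schwarz inequality of Kittaneh. -/
theorem mixed_schwarz (A : H →L[ℂ] H) (x y : H) :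
    ‖(inner ℂ (A x) y : ℂ)‖ ≤
      Real.sqrt ((inner ℂ (opAbs A x) x : ℂ).re * (inner ℂ (opAbs (adjoint A) y) y : ℂ).re) := by
  set a := adjoint A * A with ha
  set b := A * adjoint A with hb
  have ha0 : 0 ≤ a := by rw [ha, ← star_eq_adjoint]; exact star_mul_self_nonneg A
  have hb0 : 0 ≤ b := by rw [hb, ← star_eq_adjoint]; exact mul_star_self_nonneg A
  have hsa : IsSelfAdjoint a := by rw [ha, ← star_eq_adjoint]; exact .star_mul_self A
  have hsb : IsSelfAdjoint b := by rw [hb, ← star_eq_adjoint]; exact .mul_star_self A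
  have hopA : opAbs A = cfc Real.sqrt a := sqrt_eq_cfc_real a ha0 hsa
  have hopB : opAbs (adjoint A) = cfc Real.sqrt b := by
    rw [opAbs, adjoint_adjoint, ← hb]
    exact sqrt_eq_cfc_real b hb0 hsb
  set q4 : ℝ → ℝ := fun t => Real.sqrt (Real.sqrt t) with hq4
  have hq4c : Continuous q4 := Real.continuous_sqrt.comp Real.continuous_sqrt
  set c1 := (⟪opAbs A x, x⟫).re with hc1def
  set c2 := (⟪x, cfc q4 a x⟫).re with hc2def
  set d := (⟪opAbs (adjoint A) y, y⟫).re with hddef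
  have hc1 : c1 = (⟪x, cfc Real.sqrt a x⟫).re := by
    rw [hc1def, hopA, re_inner_symm']
  have hd0 : 0 ≤ d := by
    rw [hddef, hopB]
    have : 0 ≤ cfc Real.sqrt b := cfc_nonneg fun t _ => Real.sqrt_nonneg t
    simpa using inner_mono this y
  have key : ∀ ε : ℝ, 0 < ε →
      ‖⟪A x, y⟫‖ ^ 2 ≤ (c1 + 2 * ε * c2 + ε ^ 2 * ‖x‖ ^ 2) * d := by
    intro ε hε
    set h : ℝ → ℝ := fun t => q4 t + ε with hh
    set g : ℝ → ℝ := fun t => (q4 t + ε)⁻¹ with hg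
    have hpos : ∀ t, 0 < q4 t + ε := fun t =>
      add_pos_of_nonneg_of_pos (Real.sqrt_nonneg _) hε
    have hgc : Continuous g := (hq4c.add continuous_const).inv₀ fun t => (hpos t).ne'
    have hhc : Continuous h := hq4c.add continuous_const
    have hone : cfc g a * cfc h a = 1 := by
      rw [← cfc_mul g h a hgc.continuousOn hhc.continuousOn]
      exact (cfc_congr fun t _ => inv_mul_cancel₀ (hpos t).ne').trans (cfc_const_one ℝ a hsa)
    set D := A * cfc g a with hD
    have hfact : D * cfc h a = A := by rw [hD, mul_assoc, hone, mul_one]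
    set T1 := cfc h a x with hT1def
    set T2 := adjoint D y with hT2def
    have hinner : ⟪A x, y⟫ = ⟪T1, T2⟫ := by
      conv_lhs => rw [← hfact]
      rw [ContinuousLinearMap.mul_apply, ← adjoint_inner_right]
    -- T1 estimate
    have hself1 : IsSelfAdjoint (cfc h a) := cfc_predicate h a
    have hT1sq : ‖T1‖ ^ 2 = (⟪x, (cfc h a * cfc h a) x⟫).re := by
      rw [← @inner_self_eq_norm_sq ℂ, hT1def, ContinuousLinearMap.mul_apply, ← adjoint_inner_right,
        hself1.adjoint_eq]
      rfl
    have hsplit : cfc h a * cfc h a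
        = cfc Real.sqrt a + (2 * ε) • cfc q4 a + algebraMap ℝ (H →L[ℂ] H) (ε ^ 2) := by
      rw [← cfc_mul h h a hhc.continuousOn hhc.continuousOn,
        ← cfc_smul (2 * ε) q4 a hq4c.continuousOn,
        ← cfc_const (ε ^ 2) a hsa,
        ← cfc_add (a := a) _ _ (by fun_prop) (by fun_prop),
        ← cfc_add (a := a) _ _ (by fun_prop) (by fun_prop)]
      apply cfc_congr
      intro t _
      have hq : q4 t * q4 t = Real.sqrt t := Real.mul_self_sqrt (Real.sqrt_nonneg t)
      show (q4 t + ε) * (q4 t + ε) = Real.sqrt t + (2 * ε) • q4 t + ε ^ 2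
      rw [smul_eq_mul, ← hq]; ring
    have hT1sq' : ‖T1‖ ^ 2 = c1 + 2 * ε * c2 + ε ^ 2 * ‖x‖ ^ 2 := by
      rw [hT1sq, hsplit, hc1, hc2def]
      simp only [add_apply, inner_add_right, Complex.add_re, smul_apply,
        Algebra.algebraMap_eq_smul_one, one_apply]
      rw [RCLike.real_smul_eq_coe_smul (K := ℂ) (2 * ε),
        RCLike.real_smul_eq_coe_smul (K := ℂ) (ε ^ 2),
        inner_smul_right, inner_smul_right]
      have hxx : (⟪x, x⟫).re = ‖x‖ ^ 2 := by
        rw [← @inner_self_eq_norm_sq ℂ]; rfl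
      simp only [Complex.mul_re, Complex.ofReal_re, Complex.ofReal_im, zero_mul, sub_zero,
        RCLike.ofReal_re, RCLike.ofReal_im, Complex.coe_algebraMap, RCLike.re_to_complex]
      push_cast
      rw [id_eq, hxx]
    -- T2 estimate
    have hselfg : IsSelfAdjoint (cfc g a) := cfc_predicate g a
    have hadj : adjoint D = cfc g a * adjoint A := by
      rw [hD, ← star_eq_adjoint, star_mul, hselfg.star_eq, star_eq_adjoint]
    have hDD : D * adjoint D = cfc (fun t => g t * g t * t) b := by
      rw [hadj, hD, ha, hb]
      calc A * cfc g (adjoint A * A) * (cfc g (adjoint A * A) * adjoint A)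
          = A * (cfc g (adjoint A * A) * cfc g (adjoint A * A)) * adjoint A := by
            noncomm_ring
        _ = A * cfc (fun t => g t * g t) (adjoint A * A) * adjoint A := by
            rw [cfc_mul g g (adjoint A * A) hgc.continuousOn hgc.continuousOn]
        _ = cfc (fun t => g t * g t) (A * adjoint A) * A * adjoint A := by
            rw [cfc_intertwine A (fun t => g t * g t) (hgc.mul hgc)]
        _ = cfc (fun t => g t * g t) (A * adjoint A) * (A * adjoint A) := by
            rw [mul_assoc]
        _ = cfc (fun t => g t * g t) (A * adjoint A)
              * cfc (fun t : ℝ => t) (A * adjoint A) := by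
            rw [cfc_id' ℝ (A * adjoint A) (hb ▸ hsb)]
        _ = cfc (fun t => g t * g t * t) (A * adjoint A) := by
            rw [← cfc_mul (fun t => g t * g t) (fun t : ℝ => t) (A * adjoint A)
              (hgc.mul hgc).continuousOn continuous_id'.continuousOn]
    have hcont3 : Continuous fun t : ℝ => g t * g t * t := (hgc.mul hgc).mul continuous_id'
    have hmono : cfc (fun t => g t * g t * t) b ≤ cfc Real.sqrt b := by
      refine cfc_mono (fun t ht => ?_) (hf := hcont3.continuousOn)
        (hg := Real.continuous_sqrt.continuousOn)
      have ht0 : 0 ≤ t := spectrum_nonneg_of_nonneg hb0 ht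
      have hs := Real.mul_self_sqrt ht0
      have hq := Real.mul_self_sqrt (Real.sqrt_nonneg t)
      have hp := hpos t
      have hq40 : 0 ≤ q4 t := Real.sqrt_nonneg _
      have h1 : g t * g t * t = t / ((q4 t + ε) * (q4 t + ε)) := by
        rw [hg]; field_simp
      have hq' : q4 t * q4 t = Real.sqrt t := hq
      rw [h1, div_le_iff₀ (by positivity)]
      nlinarith [Real.sqrt_nonneg t, mul_nonneg (Real.sqrt_nonneg t) (mul_nonneg hq40 hε.le),
        mul_nonneg (Real.sqrt_nonneg t) (mul_pos hε hε).le]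
    have hT2sq : ‖T2‖ ^ 2 ≤ d := by
      have e1 : ‖T2‖ ^ 2 = (⟪y, (D * adjoint D) y⟫).re := by
        rw [← @inner_self_eq_norm_sq ℂ, hT2def, adjoint_inner_left, ContinuousLinearMap.mul_apply]
        rfl
      have step : (⟪y, (cfc (fun t => g t * g t * t) b) y⟫).re
          ≤ (⟪cfc Real.sqrt b y, y⟫).re := by
        rw [re_inner_symm']
        exact inner_mono hmono y
      rw [e1, hDD, hddef, hopB]
      exact step
    -- combine
    have hnormle : ‖⟪A x, y⟫‖ ≤ ‖T1‖ * ‖T2‖ := hinner ▸ norm_inner_le_norm T1 T2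
    have hs1 : 0 ≤ c1 + 2 * ε * c2 + ε ^ 2 * ‖x‖ ^ 2 := by
      rw [← hT1sq']; exact sq_nonneg _
    calc ‖⟪A x, y⟫‖ ^ 2 ≤ (‖T1‖ * ‖T2‖) ^ 2 := by
          exact pow_le_pow_left₀ (norm_nonneg _) hnormle 2
      _ = ‖T1‖ ^ 2 * ‖T2‖ ^ 2 := by ring
      _ ≤ (c1 + 2 * ε * c2 + ε ^ 2 * ‖x‖ ^ 2) * d :=
          mul_le_mul (le_of_eq hT1sq') hT2sq (sq_nonneg _) hs1
  -- take the limit ε → 0⁺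
  have hlim : Tendsto (fun ε : ℝ => (c1 + 2 * ε * c2 + ε ^ 2 * ‖x‖ ^ 2) * d)
      (nhdsWithin 0 (Set.Ioi 0)) (nhds (c1 * d)) := by
    have hcont : Continuous fun ε : ℝ => (c1 + 2 * ε * c2 + ε ^ 2 * ‖x‖ ^ 2) * d := by
      fun_prop
    have h0 := hcont.tendsto 0
    simp only [mul_zero, zero_mul, ne_eq, OfNat.ofNat_ne_zero, not_false_eq_true,
      zero_pow, add_zero] at h0
    exact h0.mono_left nhdsWithin_le_nhds
  have hfin : ‖⟪A x, y⟫‖ ^ 2 ≤ c1 * d :=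
    ge_of_tendsto hlim (eventually_nhdsWithin_of_forall fun ε hε => key ε hε)
  exact Real.le_sqrt_of_sq_le hfin
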